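/- Let λ, θ, φ be as in the normalized dominant part of a non-degenerate, simple integer linear recurrence sequence with two dominant roots. Suppose an interval I ⊆ ℝ/(2πℤ), natural numbers b₂,…,b_ℓ ≥ 1 and D ≥ 1, and reals 1 < δ₂ < … < δ_ℓ < √|λ| satisfy conditions (a)–(d): (a) b_j ≡ t_j − t₁ (mod T); (b) for all x ∈ I, 0 < cos(x) < |λ|^{b₂}·cos(x+b₂θ) < δ₂·cos(x) < … < |λ|^{b_ℓ}·cos(x+b_ℓθ) < δ_ℓ·cos(x); (c) for every nonzero integer d < D with d ∉ {b₂,…,b_{ℓ−1}}, I ∩ J_d(1,δ_ℓ) = ∅; (d) Σ_{d=D}^∞ |J_d(1,δ_ℓ)| < |I|. Then for every sufficiently small ε > 0 there is a subinterval I' of I of length ε such that conditions (a)–(d) hold with I replaced by I', the same b₂,…,b_ℓ and δ₂,…,δ_ℓ, and some D' > ε^{−1/2} in place of D. -/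

import Mathlib

open Real MeasureTheory ENNReal

instance : Fact (0 < 2 * Real.pi) := ⟨by positivity⟩

noncomputable instance : MeasureSpace Real.Angle :=
  inferInstanceAs (MeasureSpace (AddCircle (2 * Real.pi)))

/-- The set `J_d(γ,δ) = {x ∈ ℝ/2πℤ : 0 < γ·cos x ∧ γ·cos x < |λ|^d·cos(x+dθ) < δ·cos x}`. -/
noncomputable def Jset (lam : ℂ) (θ : ℝ) (d : ℤ) (γ δ : ℝ) : Set Real.Angle :=
  {x : Real.Angle | 0 < γ * x.cos ∧
    γ * x.cos < ‖lam‖ ^ d * (x + ((d * θ : ℝ) : Real.Angle)).cos ∧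
    ‖lam‖ ^ d * (x + ((d * θ : ℝ) : Real.Angle)).cos < δ * x.cos}

/-- The limiting set `J_d(0,δ)`. -/
noncomputable def Jset0 (lam : ℂ) (θ : ℝ) (d : ℤ) (δ : ℝ) : Set Real.Angle :=
  {x : Real.Angle | 0 < x.cos ∧
    0 < ‖lam‖ ^ d * (x + ((d * θ : ℝ) : Real.Angle)).cos ∧
    ‖lam‖ ^ d * (x + ((d * θ : ℝ) : Real.Angle)).cos < δ * x.cos}

section Aux

open Set

instance : BorelSpace Real.Angle := inferInstanceAs (BorelSpace (AddCircle (2 * Real.pi)))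

lemma aux_cos_shift (w : ℝ) (k : ℤ) : Real.cos (w - 2*π*k) = Real.cos w := by
  rw [show w - 2*π*k = w + ((-k : ℤ) : ℝ) * (2*π) by push_cast; ring]
  exact Real.cos_add_int_mul_two_pi w (-k)

lemma aux_sin_shift (w : ℝ) (k : ℤ) : Real.sin (w - 2*π*k) = Real.sin w := by
  rw [show w - 2*π*k = w + ((-k : ℤ) : ℝ) * (2*π) by push_cast; ring]
  exact Real.sin_add_int_mul_two_pi w (-k)

lemma angle_proj_measure (u : ℝ) {S : Set Real.Angle} (hS : MeasurableSet S) :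
    volume S = volume ((fun y : ℝ => (y : Real.Angle)) ⁻¹' S ∩ Ioc u (u + 2*π)) :=
  AddCircle.add_projection_respects_measure (T := 2*π) u hS

lemma angle_cos_le_one (x : Real.Angle) : x.cos ≤ 1 := by
  induction x using Real.Angle.induction_on
  rw [Real.Angle.cos_coe]
  exact Real.cos_le_one _

lemma volume_image_Ioo (u v : ℝ) (h : u < v) (h2 : v - u ≤ 2*π) :
    volume ((fun y : ℝ => (y : Real.Angle)) '' Set.Ioo u v) = ENNReal.ofReal (v - u) := by
  have hop : IsOpen ((fun y : ℝ => (y : Real.Angle)) '' Set.Ioo u v) :=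
    isOpenMap_quotient_mk'_add _ isOpen_Ioo
  rw [angle_proj_measure u hop.measurableSet]
  have hset : (fun y : ℝ => (y : Real.Angle)) ⁻¹' ((fun y : ℝ => (y : Real.Angle)) '' Set.Ioo u v)
      ∩ Ioc u (u + 2*π) = Ioo u v := by
    ext z
    constructor
    · rintro ⟨⟨w, hw, hwz⟩, hz⟩
      have : ∃ k : ℤ, w - z = 2*π*k := by
        rw [Real.Angle.angle_eq_iff_two_pi_dvd_sub] at hwz; exact hwz
      obtain ⟨k, hk⟩ := this
      have hk0 : k = 0 := by
        have h1 : w - z < 2*π*1 := by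
          have := hw.2; have := hz.1; nlinarith [Real.pi_pos]
        have h2' : 2*π*(-1) < w - z := by
          have := hw.1; have := hz.2; nlinarith [Real.pi_pos]
        rw [hk] at h1 h2'
        have := Real.pi_pos
        have l1 : (k:ℝ) < 1 := by nlinarith
        have l2 : (-1:ℝ) < k := by nlinarith
        have : k < 1 := by exact_mod_cast l1
        have : (-1:ℤ) < k := by exact_mod_cast l2
        omega
      rw [hk0] at hk
      have : w = z := by push_cast at hk; linarith
      rwa [← this]
    · intro hz
      exact ⟨⟨z, hz, rfl⟩, ⟨hz.1, by linarith [hz.2]⟩⟩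
  rw [hset, Real.volume_Ioo]

lemma oc_lemma (A B : ℝ) (k : ℤ) {x y z : ℝ}
    (hx : x ∈ Ioo (2*π*k - π/2) (2*π*k + π/2)) (hz : z ∈ Ioo (2*π*k - π/2) (2*π*k + π/2))
    (hxy : x ≤ y) (hyz : y ≤ z)
    (hA : 0 < A * Real.cos x + B * Real.sin x) (hC : 0 < A * Real.cos z + B * Real.sin z) :
    0 < A * Real.cos y + B * Real.sin y := by
  have hshift : ∀ w : ℝ, Real.cos w = Real.cos (w - 2*π*k) ∧ Real.sin w = Real.sin (w - 2*π*k) :=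
    fun w => ⟨(aux_cos_shift w k).symm, (aux_sin_shift w k).symm⟩
  set x' := x - 2*π*k with hx'
  set y' := y - 2*π*k with hy'
  set z' := z - 2*π*k with hz'
  have hxm : x' ∈ Ioo (-(π/2)) (π/2) :=
    ⟨by simp only [hx']; linarith [hx.1], by simp only [hx']; linarith [hx.2]⟩
  have hzm : z' ∈ Ioo (-(π/2)) (π/2) :=
    ⟨by simp only [hz']; linarith [hz.1], by simp only [hz']; linarith [hz.2]⟩
  have hym : y' ∈ Ioo (-(π/2)) (π/2) :=
    ⟨by simp only [hy']; linarith [hx.1], by simp only [hy']; linarith [hz.2]⟩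
  have hcx := (hshift x).1; have hsx := (hshift x).2
  have hcy := (hshift y).1; have hsy := (hshift y).2
  have hcz := (hshift z).1; have hsz := (hshift z).2
  rw [hcx, hsx] at hA
  rw [hcz, hsz] at hC
  rw [hcy, hsy]
  have cxpos := Real.cos_pos_of_mem_Ioo hxm
  have cypos := Real.cos_pos_of_mem_Ioo hym
  have czpos := Real.cos_pos_of_mem_Ioo hzm
  have key : ∀ w : ℝ, 0 < Real.cos w →
      (A * Real.cos w + B * Real.sin w = Real.cos w * (A + B * Real.tan w)) := by
    intro w hw
    rw [Real.tan_eq_sin_div_cos]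
    field_simp
  rw [key x' cxpos] at hA
  rw [key z' czpos] at hC
  rw [key y' cypos]
  have htA : 0 < A + B * Real.tan x' := by nlinarith
  have htC : 0 < A + B * Real.tan z' := by nlinarith
  have hmono := Real.strictMonoOn_tan.monotoneOn
  have t1 : Real.tan x' ≤ Real.tan y' := hmono hxm hym (by simp only [hx', hy']; linarith)
  have t2 : Real.tan y' ≤ Real.tan z' := hmono hym hzm (by simp only [hy', hz']; linarith)
  have : 0 < A + B * Real.tan y' := by
    rcases le_or_gt 0 B with hB | hB
    · nlinarith
    · nlinarith
  exact mul_pos cypos this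

lemma pigeonhole (a ε : ℝ) (hε : 0 < ε) (M n : ℕ) (C : ℕ → Set ℝ)
    (hconv : ∀ j, ∀ x y z : ℝ, x ∈ C j → z ∈ C j → x ≤ y → y ≤ z → y ∈ C j)
    (hbad : ∀ i ∈ Finset.range M, ∃ j ∈ Finset.range n,
      (Set.Ioo (a + i*ε) (a + i*ε + ε) ∩ C j).Nonempty) :
    (M : ℝ) * ε ≤ ∑ j ∈ Finset.range n,
      ((volume (C j ∩ Set.Ioo a (a + M*ε))).toReal + 2*ε) := by
  classical
  set K : ℕ → Finset ℕ := fun j =>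
    (Finset.range M).filter (fun i => (Set.Ioo (a + i*ε) (a + i*ε + ε) ∩ C j).Nonempty) with hK
  have hcover : Finset.range M ⊆ (Finset.range n).biUnion K := by
    intro i hi
    obtain ⟨j, hj, hne⟩ := hbad i hi
    exact Finset.mem_biUnion.mpr ⟨j, hj, Finset.mem_filter.mpr ⟨hi, hne⟩⟩
  have hcard : M ≤ ∑ j ∈ Finset.range n, (K j).card := by
    calc M = (Finset.range M).card := (Finset.card_range M).symm
    _ ≤ ((Finset.range n).biUnion K).card := Finset.card_le_card hcover
    _ ≤ ∑ j ∈ Finset.range n, (K j).card := Finset.card_biUnion_le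
  have hstep : ∀ j, ((K j).card : ℝ) * ε ≤ (volume (C j ∩ Set.Ioo a (a + M*ε))).toReal + 2*ε := by
    intro j
    rcases (K j).eq_empty_or_nonempty with hKe | hKne
    · rw [hKe]
      simp only [Finset.card_empty, Nat.cast_zero, zero_mul]
      positivity
    · set i₁ := (K j).min' hKne with hi₁
      set i₂ := (K j).max' hKne with hi₂
      have h12 : i₁ ≤ i₂ := Finset.min'_le _ _ ((K j).max'_mem hKne)
      have hsub : K j ⊆ Finset.Icc i₁ i₂ := fun i hi =>
        Finset.mem_Icc.mpr ⟨Finset.min'_le _ _ hi, Finset.le_max' _ _ hi⟩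
      have hcardK : (K j).card ≤ i₂ - i₁ + 1 := by
        calc (K j).card ≤ (Finset.Icc i₁ i₂).card := Finset.card_le_card hsub
        _ = i₂ + 1 - i₁ := Nat.card_Icc i₁ i₂
        _ ≤ i₂ - i₁ + 1 := by omega
      rcases le_or_gt i₂ (i₁ + 1) with hle | hlt
      · have : (K j).card ≤ 2 := by omega
        have h2 : ((K j).card : ℝ) ≤ 2 := by exact_mod_cast this
        nlinarith [ENNReal.toReal_nonneg (a := volume (C j ∩ Set.Ioo a (a + M*ε)))]
      · have hmem1 : i₁ ∈ K j := (K j).min'_mem hKne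
        have hmem2 : i₂ ∈ K j := (K j).max'_mem hKne
        obtain ⟨x, hxI, hxC⟩ := (Finset.mem_filter.mp hmem1).2
        obtain ⟨z, hzI, hzC⟩ := (Finset.mem_filter.mp hmem2).2
        have hi₂M : i₂ < M := Finset.mem_range.mp (Finset.mem_filter.mp hmem2).1
        have hsubset : Set.Ioo (a + (i₁+1)*ε) (a + i₂*ε) ⊆ C j ∩ Set.Ioo a (a + M*ε) := by
          intro y hy
          have hxy : x ≤ y := by
            have : x < a + i₁*ε + ε := hxI.2
            have : a + (i₁+1)*ε < y := hy.1
            push_cast at *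
            nlinarith
          have hyz : y ≤ z := by
            have : a + (i₂ : ℝ)*ε < z := hzI.1
            have : y < a + i₂*ε := hy.2
            linarith
          refine ⟨hconv j x y z hxC hzC hxy hyz, ?_, ?_⟩
          · have : a + (i₁+1)*ε > a := by push_cast; nlinarith [(Nat.cast_nonneg i₁ : (0:ℝ) ≤ i₁)]
            linarith [hy.1]
          · have : a + (i₂:ℝ)*ε ≤ a + M*ε := by
              have : (i₂ : ℝ) ≤ M := by exact_mod_cast hi₂M.le
              nlinarith
            linarith [hy.2]
        have hvol : ENNReal.ofReal ((i₂ - (i₁+1) : ℝ) * ε)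
            ≤ volume (C j ∩ Set.Ioo a (a + M*ε)) := by
          calc ENNReal.ofReal ((i₂ - (i₁+1) : ℝ) * ε)
              = volume (Set.Ioo (a + (i₁+1)*ε) (a + i₂*ε)) := by
                rw [Real.volume_Ioo]; congr 1; push_cast; ring
          _ ≤ volume (C j ∩ Set.Ioo a (a + M*ε)) := measure_mono hsubset
        have hfin : volume (C j ∩ Set.Ioo a (a + M*ε)) ≠ ⊤ := by
          refine ne_top_of_le_ne_top ?_ (measure_mono Set.inter_subset_right)
          rw [Real.volume_Ioo]; exact ofReal_ne_top
        have hc : (0:ℝ) < ((i₂:ℝ) - ((i₁:ℝ)+1)) * ε := by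
          have : (i₁:ℝ) + 2 ≤ (i₂:ℝ) := by exact_mod_cast hlt
          nlinarith
        have htr : ((i₂:ℝ) - ((i₁:ℝ)+1)) * ε ≤ (volume (C j ∩ Set.Ioo a (a + M*ε))).toReal := by
          rw [← ENNReal.ofReal_le_iff_le_toReal hfin]
          exact hvol
        have hcardR : ((K j).card : ℝ) ≤ (i₂:ℝ) - (i₁:ℝ) + 1 := by
          have : ((K j).card : ℝ) ≤ ((i₂ - i₁ + 1 : ℕ) : ℝ) := by exact_mod_cast hcardK
          have h' : ((i₂ - i₁ + 1 : ℕ) : ℝ) = (i₂:ℝ) - (i₁:ℝ) + 1 := by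
            have : (i₁:ℕ) ≤ i₂ := h12
            push_cast [Nat.cast_sub this]
            ring
          linarith [this, h'.le, h'.ge]
        nlinarith
  calc (M:ℝ) * ε ≤ (∑ j ∈ Finset.range n, (K j).card : ℕ) * ε := by
        have : (M:ℝ) ≤ ((∑ j ∈ Finset.range n, (K j).card : ℕ) : ℝ) := by exact_mod_cast hcard
        nlinarith
  _ = ∑ j ∈ Finset.range n, ((K j).card : ℝ) * ε := by
        push_cast
        rw [Finset.sum_mul]
  _ ≤ ∑ j ∈ Finset.range n, ((volume (C j ∩ Set.Ioo a (a + M*ε))).toReal + 2*ε) :=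
        Finset.sum_le_sum (fun j _ => hstep j)

lemma sum_range_two_mul (K : ℕ) (g : ℕ → ℝ) :
    ∑ j ∈ Finset.range (2*K), g j = ∑ i ∈ Finset.range K, (g (2*i) + g (2*i+1)) := by
  induction K with
  | zero => simp
  | succ n ih =>
      rw [show 2*(n+1) = 2*n + 1 + 1 by ring, Finset.sum_range_succ, Finset.sum_range_succ,
        Finset.sum_range_succ, ih]
      ring_nf

lemma cos_pos_Ioc {z : ℝ} (hz : z ∈ Ioc (-π) π) (h : 0 < Real.cos z) :
    -(π/2) < z ∧ z < π/2 := by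
  have hπ := Real.pi_pos
  constructor
  · by_contra hcon
    push_neg at hcon
    have : Real.cos (-z) ≤ 0 :=
      Real.cos_nonpos_of_pi_div_two_le_of_le (by linarith) (by linarith [hz.1])
    rw [Real.cos_neg] at this
    linarith
  · by_contra hcon
    push_neg at hcon
    have : Real.cos z ≤ 0 :=
      Real.cos_nonpos_of_pi_div_two_le_of_le hcon (by linarith [hz.2])
    linarith

lemma band_subset {t : ℝ} (ht : t ≤ 1) {z : ℝ} (hz : z ∈ Ioc (-π) π)
    (h1 : 0 < Real.cos z) (h2 : Real.cos z < t) :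
    z ∈ Ioo (-(π/2)) (-(π/2) + π/2*t) ∪ Ioo (π/2 - π/2*t) (π/2) := by
  have hπ := Real.pi_pos
  have ht0 : 0 < t := lt_trans h1 h2
  have hs0 : 0 ≤ π/2*t := by positivity
  have hs2 : π/2*t ≤ π/2 := by nlinarith
  obtain ⟨hz1, hz2⟩ := cos_pos_Ioc hz h1
  have key : t ≤ Real.cos (π/2 - π/2*t) := by
    rw [Real.cos_pi_div_two_sub]
    have := Real.mul_le_sin hs0 hs2
    have h2π : (2:ℝ)/π * (π/2*t) = t := by field_simp
    linarith
  rcases le_or_gt 0 z with hz0 | hz0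
  · right
    constructor
    · by_contra hcon
      push_neg at hcon
      have := Real.cos_le_cos_of_nonneg_of_le_pi hz0 (by linarith) hcon
      linarith
    · exact hz2
  · left
    refine ⟨hz1, ?_⟩
    by_contra hcon
    push_neg at hcon
    have hle : -z ≤ π/2 - π/2*t := by linarith
    have := Real.cos_le_cos_of_nonneg_of_le_pi (by linarith) (by linarith) hle
    rw [Real.cos_neg] at this
    linarith

lemma volume_Jset_le (lam : ℂ) (θ : ℝ) (habs : 1 < ‖lam‖) {d : ℤ} (hd : 1 ≤ d)
    {δ : ℝ} (hδ0 : 0 < δ) (hδ : δ ≤ Real.sqrt (‖lam‖)) :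
    volume (Jset lam θ d 1 δ) ≤ ENNReal.ofReal (π * (δ * (‖lam‖ ^ d)⁻¹)) := by
  have hπ := Real.pi_pos
  set r := ‖lam‖ with hr
  have hr0 : (0:ℝ) < r := by linarith
  have hrd0 : (0:ℝ) < r ^ d := zpow_pos hr0 d
  have hrdr : r ≤ r ^ d := by
    calc r = r ^ (1:ℤ) := (zpow_one r).symm
    _ ≤ r ^ d := by
      apply zpow_le_zpow_right₀ habs.le hd
  have hδr : δ ≤ r := by
    have h1 : Real.sqrt r ≤ r := by
      nlinarith [Real.sq_sqrt hr0.le, Real.sqrt_nonneg r,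
        Real.one_le_sqrt.mpr (by linarith : (1:ℝ) ≤ r)]
    linarith
  set t := δ * (r ^ d)⁻¹ with htdef
  have ht0 : 0 < t := by positivity
  have hδrd : δ ≤ r ^ d := hδr.trans hrdr
  have ht1 : t ≤ 1 := by
    rw [htdef]
    calc δ * (r ^ d)⁻¹ ≤ r ^ d * (r ^ d)⁻¹ :=
          mul_le_mul_of_nonneg_right hδrd (by positivity)
    _ = 1 := mul_inv_cancel₀ hrd0.ne'
  set c : ℝ := (d : ℝ) * θ with hc
  set S : Set Real.Angle :=
    {x | 0 < (x + ((c : ℝ) : Real.Angle)).cos ∧ (x + ((c : ℝ) : Real.Angle)).cos < t} with hS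
  have hsub : Jset lam θ d 1 δ ⊆ S := by
    rintro x ⟨h1, h2, h3⟩
    rw [one_mul] at h1 h2
    constructor
    · nlinarith
    · have hcos1 : x.cos ≤ 1 := angle_cos_le_one x
      have hlt : r ^ d * (x + ((c:ℝ) : Real.Angle)).cos < δ := by nlinarith
      rw [htdef, ← div_eq_mul_inv, lt_div_iff₀ hrd0]
      linarith [mul_comm (r ^ d) (x + ((c:ℝ) : Real.Angle)).cos]
  have hSopen : IsOpen S := by
    have hcont : Continuous (fun x : Real.Angle => (x + ((c : ℝ) : Real.Angle)).cos) :=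
      Real.Angle.continuous_cos.comp (continuous_id.add continuous_const)
    have : S = (fun x : Real.Angle => (x + ((c : ℝ) : Real.Angle)).cos) ⁻¹' (Ioo 0 t) := by
      ext x; simp [hS, mem_Ioo]
    rw [this]
    exact isOpen_Ioo.preimage hcont
  have hpre : (fun y : ℝ => (y : Real.Angle)) ⁻¹' S
      = (fun y : ℝ => y + c) ⁻¹' {z : ℝ | 0 < Real.cos z ∧ Real.cos z < t} := by
    ext y
    simp only [mem_preimage, hS, mem_setOf_eq, ← Real.Angle.coe_add, Real.Angle.cos_coe]
  have hIoc : Ioc (-π - c) (-π - c + 2*π) = (fun y : ℝ => y + c) ⁻¹' Ioc (-π) π := by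
    ext y
    simp only [mem_Ioc, mem_preimage]
    constructor
    · rintro ⟨p, q⟩; constructor <;> linarith
    · rintro ⟨p, q⟩; constructor <;> linarith
  calc volume (Jset lam θ d 1 δ) ≤ volume S := measure_mono hsub
  _ = volume ((fun y : ℝ => (y : Real.Angle)) ⁻¹' S ∩ Ioc (-π - c) (-π - c + 2*π)) :=
      angle_proj_measure _ hSopen.measurableSet
  _ = volume ((fun y : ℝ => y + c) ⁻¹'
        ({z : ℝ | 0 < Real.cos z ∧ Real.cos z < t} ∩ Ioc (-π) π)) := by
      rw [hpre, hIoc, preimage_inter]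
  _ = volume ({z : ℝ | 0 < Real.cos z ∧ Real.cos z < t} ∩ Ioc (-π) π) := by
      exact measure_preimage_add_right volume c _
  _ ≤ volume (Ioo (-(π/2)) (-(π/2) + π/2*t) ∪ Ioo (π/2 - π/2*t) (π/2)) := by
      apply measure_mono
      rintro z ⟨⟨h1, h2⟩, hzI⟩
      exact band_subset ht1 hzI h1 h2
  _ ≤ volume (Ioo (-(π/2)) (-(π/2) + π/2*t)) + volume (Ioo (π/2 - π/2*t) (π/2)) :=
      measure_union_le _ _
  _ ≤ ENNReal.ofReal (π * (δ * (r ^ d)⁻¹)) := by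
      rw [Real.volume_Ioo, Real.volume_Ioo]
      rw [← ENNReal.ofReal_add (by nlinarith) (by nlinarith)]
      apply ENNReal.ofReal_le_ofReal
      have : t = δ * (r ^ d)⁻¹ := htdef
      nlinarith

end Aux

lemma aux_sqrt_facts {ε : ℝ} (h0 : 0 < ε) (h1 : ε ≤ 1) :
    ε ≤ Real.sqrt ε ∧ Real.sqrt ε ≤ 1 := by
  have hs := Real.sqrt_nonneg ε
  have hsq := Real.sq_sqrt h0.le
  constructor
  · nlinarith
  · nlinarith

lemma aux_tail_small {C₀ C₁ r ε w : ℝ} {N : ℕ}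
    (hC₀ : 0 < C₀) (hC₁ : C₀ ≤ C₁) (hC₁0 : 0 < C₁) (hr : 0 < r)
    (hbig : (N:ℝ)^3 / r^N < 1/C₁) (hN1 : 1 ≤ N) (hε : 0 < ε) (hw : 0 < w)
    (hw2 : w^2 = ε⁻¹) (hwN : w < (N:ℝ)) :
    C₀ * (r⁻¹)^N < ε := by
  have hrN : (0:ℝ) < r^N := by positivity
  have hN0 : (0:ℝ) < (N:ℝ) := by exact_mod_cast hN1
  have hN0' : (1:ℝ) ≤ (N:ℝ) := by exact_mod_cast hN1
  have hcube : ε⁻¹ < ((N:ℝ))^3 := by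
    have h2 : w^2 < ((N:ℝ))^2 := by nlinarith
    have h3 : ((N:ℝ))^2 ≤ ((N:ℝ))^3 := by nlinarith
    rw [← hw2]; linarith
  have hC₁r : C₁ * ((N:ℝ))^3 < r^N := by
    rw [div_lt_div_iff₀ hrN hC₁0] at hbig
    nlinarith
  have hinv : C₁ / r^N < 1/((N:ℝ))^3 := by
    rw [div_lt_div_iff₀ hrN (by positivity)]
    nlinarith
  have hfin : 1/((N:ℝ))^3 < ε := by
    rw [div_lt_iff₀ (by positivity)]
    have hii : 0 < ε⁻¹ := by positivity
    calc (1:ℝ) = ε * ε⁻¹ := by field_simp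
    _ < ε * (N:ℝ)^3 := by apply mul_lt_mul_of_pos_left hcube hε
  calc C₀ * (r⁻¹)^N ≤ C₁ * (r⁻¹)^N := mul_le_mul_of_nonneg_right hC₁ (by positivity)
  _ = C₁ / r^N := by rw [inv_pow, div_eq_mul_inv]
  _ < 1/((N:ℝ))^3 := hinv
  _ < ε := hfin

lemma aux_sq_lt {x w : ℝ} (hx : 0 ≤ x) (hw : 0 ≤ w) (h : x^2 < w^2) : x < w := by
  nlinarith

lemma aux_final_contra {L S gap ε D Dr' M : ℝ}
    (hgapdef : gap = L - S) (hgap : 0 < gap) (hε : 0 < ε)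
    (hD0 : 0 ≤ D)
    (hεsq : ε ≤ Real.sqrt ε)
    (hεgap : Real.sqrt ε < gap/(4*D+9))
    (hD'up : Dr' ≤ D + Real.sqrt ε / ε + 1)
    (hMε : L - ε < M * ε)
    (hcontra : M * ε ≤ S + 4*(Dr' - D)*ε + 4*D*ε) : False := by
  have hsq0 : 0 < Real.sqrt ε := lt_of_lt_of_le hε hεsq
  have h9 : (0:ℝ) < 4*D+9 := by linarith
  have h1 : (Dr' - D) * ε ≤ (Real.sqrt ε / ε + 1) * ε := by nlinarith
  have h2 : (Real.sqrt ε / ε + 1) * ε = Real.sqrt ε + ε := by field_simp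
  have h3 : L - ε < S + 4*(Real.sqrt ε + ε) + 4*D*ε := by nlinarith
  have h4 : gap < 5*ε + 4*Real.sqrt ε + 4*D*ε := by rw [hgapdef]; linarith
  have h5 : 5*ε + 4*Real.sqrt ε + 4*D*ε ≤ (4*D+9) * Real.sqrt ε := by nlinarith
  have h6 : (4*D+9) * Real.sqrt ε < gap := by
    have := mul_lt_mul_of_pos_left hεgap h9
    calc (4*D+9) * Real.sqrt ε < (4*D+9) * (gap/(4*D+9)) := this
    _ = gap := by field_simp
  linarith

instance : IsFiniteMeasure (volume : Measure Real.Angle) :=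
  inferInstanceAs (IsFiniteMeasure (volume : Measure (AddCircle (2 * Real.pi))))

lemma angle_volume_univ : volume (Set.univ : Set Real.Angle) = ENNReal.ofReal (2*π) :=
  AddCircle.measure_univ (2*π)
set_option maxHeartbeats 1000000 in
/-- Suppose the interval `I = (a,b)` of `ℝ/2πℤ`, the naturals
`b₂,…,b_ℓ ≥ 1`, `D ≥ 1`, and reals `1 = δ₁ < δ₂ < ⋯ < δ_ℓ < √|λ|` satisfy conditions
(a)–(d) of the density lemma. Then for every sufficiently small `ε > 0` there is a
subinterval `I' ⊆ I` of length `ε` for which conditions (b)–(d) hold with the same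
`b_j, δ_j` and some `D' > ε^{-1/2}` in place of `D`. -/
theorem stmt_11 (lam : ℂ) (θ : ℝ)
    (halg : IsAlgebraic ℚ lam) (habs : 1 < ‖lam‖)
    (hθ : lam = (‖lam‖ : ℂ) * Complex.exp (θ * Complex.I))
    (hirr : ∀ q : ℚ, θ ≠ (q : ℝ) * Real.pi)
    (ℓ T : ℕ) (hℓ : 2 ≤ ℓ) (hT : 2 ≤ T)
    (t : ℕ → ℕ) (ht : ∀ j : ℕ, 1 ≤ j → j ≤ ℓ → t j < T)
    (a b : ℝ) (hab : a < b)
    (D : ℕ) (hD : 1 ≤ D)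
    (bf : ℕ → ℕ) (hbf : ∀ j : ℕ, 2 ≤ j → j ≤ ℓ → 1 ≤ bf j)
    (δ' : ℕ → ℝ) (hδ1 : δ' 1 = 1)
    (hδmono : ∀ j : ℕ, 1 ≤ j → j < ℓ → δ' j < δ' (j + 1))
    (hδtop : δ' ℓ < Real.sqrt (‖lam‖))
    (hcondA : ∀ j : ℕ, 2 ≤ j → j ≤ ℓ →
      ((bf j : ℤ)) ≡ ((t j : ℤ) - (t 1 : ℤ)) [ZMOD (T : ℤ)])
    (hcondB : ∀ x : Real.Angle, x ∈ (fun y : ℝ => (y : Real.Angle)) '' Set.Ioo a b →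
      0 < x.cos ∧
      ∀ j : ℕ, 2 ≤ j → j ≤ ℓ →
        δ' (j - 1) * x.cos <
            ‖lam‖ ^ (bf j : ℤ) * (x + ((bf j * θ : ℝ) : Real.Angle)).cos ∧
          ‖lam‖ ^ (bf j : ℤ) * (x + ((bf j * θ : ℝ) : Real.Angle)).cos <
            δ' j * x.cos)
    (hcondC : ∀ d : ℤ, d ≠ 0 → d < (D : ℤ) →
      (∀ j : ℕ, 2 ≤ j → j ≤ ℓ - 1 → d ≠ (bf j : ℤ)) →
      ((fun y : ℝ => (y : Real.Angle)) '' Set.Ioo a b) ∩ Jset lam θ d 1 (δ' ℓ) = ∅)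
    (hcondD : ∑' k : ℕ, volume (Jset lam θ ((D : ℤ) + (k : ℤ)) 1 (δ' ℓ)) <
      volume ((fun y : ℝ => (y : Real.Angle)) '' Set.Ioo a b)) :
    ∃ ε₀ : ℝ, 0 < ε₀ ∧ ∀ ε : ℝ, 0 < ε → ε < ε₀ →
      ∃ a' b' : ℝ, a ≤ a' ∧ a' < b' ∧ b' ≤ b ∧ b' - a' = ε ∧
        ∃ D' : ℕ, ε ^ (-(1 : ℝ) / 2) < (D' : ℝ) ∧
          (∀ x : Real.Angle, x ∈ (fun y : ℝ => (y : Real.Angle)) '' Set.Ioo a' b' →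
            0 < x.cos ∧
            ∀ j : ℕ, 2 ≤ j → j ≤ ℓ →
              δ' (j - 1) * x.cos <
                  ‖lam‖ ^ (bf j : ℤ) * (x + ((bf j * θ : ℝ) : Real.Angle)).cos ∧
                ‖lam‖ ^ (bf j : ℤ) * (x + ((bf j * θ : ℝ) : Real.Angle)).cos <
                  δ' j * x.cos) ∧
          (∀ d : ℤ, d ≠ 0 → d < (D' : ℤ) →
            (∀ j : ℕ, 2 ≤ j → j ≤ ℓ - 1 → d ≠ (bf j : ℤ)) →
            ((fun y : ℝ => (y : Real.Angle)) '' Set.Ioo a' b' ∩ Jset lam θ d 1 (δ' ℓ) = ∅)) ∧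
          (∑' k : ℕ, volume (Jset lam θ ((D' : ℤ) + (k : ℤ)) 1 (δ' ℓ)) <
            volume ((fun y : ℝ => (y : Real.Angle)) '' Set.Ioo a' b')) := by
  classical
  have hπ := Real.pi_pos
  set r := ‖lam‖ with hrdef
  have hr0 : (0:ℝ) < r := by linarith
  -- 1 ≤ δ' ℓ
  have hδchain : ∀ j : ℕ, 1 ≤ j → j ≤ ℓ → 1 ≤ δ' j := by
    intro j
    induction j with
    | zero => intro h; omega
    | succ n ih =>
        intro _ hle
        rcases Nat.eq_zero_or_pos n with hn | hn
        · subst hn; rw [hδ1]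
        · have h1 : 1 ≤ δ' n := ih hn (by omega)
          have := hδmono n hn (by omega)
          linarith
  have hδℓ1 : 1 ≤ δ' ℓ := hδchain ℓ (by omega) le_rfl
  have hδℓ0 : 0 < δ' ℓ := by linarith
  -- the length of the interval, capped at 2π
  set L : ℝ := min (b - a) (2*π) with hLdef
  have hL0 : 0 < L := lt_min (by linarith) (by linarith)
  have hL2π : L ≤ 2*π := min_le_right _ _
  have hLba : L ≤ b - a := min_le_left _ _
  -- volume of the interval is at most ofReal L
  have volI_le : volume ((fun y : ℝ => (y : Real.Angle)) '' Set.Ioo a b) ≤ ENNReal.ofReal L := by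
    rcases le_or_gt (b - a) (2*π) with h | h
    · rw [volume_image_Ioo a b hab h]
      rw [hLdef, min_eq_left h]
    · have hL : L = 2*π := min_eq_right h.le
      rw [hL]
      calc volume ((fun y : ℝ => (y : Real.Angle)) '' Set.Ioo a b)
          ≤ volume (Set.univ : Set Real.Angle) := measure_mono (Set.subset_univ _)
      _ = ENNReal.ofReal (2*π) := angle_volume_univ
  have htsum_lt : (∑' k : ℕ, volume (Jset lam θ ((D : ℤ) + (k : ℤ)) 1 (δ' ℓ)))
      < ENNReal.ofReal L := lt_of_lt_of_le hcondD volI_le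
  have htsum_ne : (∑' k : ℕ, volume (Jset lam θ ((D : ℤ) + (k : ℤ)) 1 (δ' ℓ))) ≠ ⊤ :=
    htsum_lt.ne_top
  set S : ℝ := (∑' k : ℕ, volume (Jset lam θ ((D : ℤ) + (k : ℤ)) 1 (δ' ℓ))).toReal with hSdef
  have hS_lt : S < L := by
    rw [hSdef]
    exact (ENNReal.lt_ofReal_iff_toReal_lt htsum_ne).mp htsum_lt
  have hS0 : 0 ≤ S := ENNReal.toReal_nonneg
  set gap : ℝ := L - S with hgapdef
  have hgap : 0 < gap := by rw [hgapdef]; linarith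
  -- openness of Jset
  have Jopen : ∀ d : ℤ, IsOpen (Jset lam θ d 1 (δ' ℓ)) := by
    intro d
    have hc1 : Continuous (fun x : Real.Angle => (1:ℝ) * x.cos) :=
      continuous_const.mul Real.Angle.continuous_cos
    have hc2 : Continuous (fun x : Real.Angle =>
        r ^ d * (x + ((d * θ : ℝ) : Real.Angle)).cos) :=
      continuous_const.mul (Real.Angle.continuous_cos.comp (continuous_id.add continuous_const))
    have hc3 : Continuous (fun x : Real.Angle => δ' ℓ * x.cos) :=
      continuous_const.mul Real.Angle.continuous_cos
    have : Jset lam θ d 1 (δ' ℓ) =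
        {x : Real.Angle | 0 < 1 * x.cos} ∩
        ({x : Real.Angle | 1 * x.cos < r ^ d * (x + ((d * θ : ℝ) : Real.Angle)).cos} ∩
         {x : Real.Angle | r ^ d * (x + ((d * θ : ℝ) : Real.Angle)).cos < δ' ℓ * x.cos}) := by
      ext x; simp [Jset, Set.mem_setOf_eq, Set.mem_inter_iff, and_assoc, hrdef]
    rw [this]
    exact (isOpen_lt continuous_const hc1).inter
      ((isOpen_lt hc1 hc2).inter (isOpen_lt hc2 hc3))
  -- real lifts
  set P : ℤ → Set ℝ := fun d => (fun y : ℝ => (y : Real.Angle)) ⁻¹' (Jset lam θ d 1 (δ' ℓ))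
    with hPdef
  have hcoe_cont : Continuous (fun y : ℝ => (y : Real.Angle)) := continuous_quotient_mk'
  have hPopen : ∀ d, IsOpen (P d) := fun d => (Jopen d).preimage hcoe_cont
  have hPmem : ∀ (d : ℤ) (y : ℝ), y ∈ P d ↔
      (0 < Real.cos y ∧ Real.cos y < r ^ d * Real.cos (y + d * θ) ∧
        r ^ d * Real.cos (y + d * θ) < δ' ℓ * Real.cos y) := by
    intro d y
    simp only [hPdef, Set.mem_preimage, Jset, Set.mem_setOf_eq, ← Real.Angle.coe_add,
      Real.Angle.cos_coe, one_mul, hrdef]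
  -- windows
  set W : ℤ → Set ℝ := fun k => Set.Ioo (2*π*k - π/2) (2*π*k + π/2) with hWdef
  have hPWconv : ∀ (d k : ℤ), ∀ x y z : ℝ, x ∈ P d ∩ W k → z ∈ P d ∩ W k →
      x ≤ y → y ≤ z → y ∈ P d ∩ W k := by
    intro d k x y z hx hz hxy hyz
    have hyW : y ∈ W k := ⟨lt_of_lt_of_le hx.2.1 hxy, lt_of_le_of_lt hyz hz.2.2⟩
    have hycos : 0 < Real.cos y := by
      have hmem : y - 2*π*k ∈ Set.Ioo (-(π/2)) (π/2) :=
        ⟨by have := hyW.1; linarith,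
         by have := hyW.2; linarith⟩
      have := Real.cos_pos_of_mem_Ioo hmem
      rwa [aux_cos_shift y k] at this
    have hx1 := (hPmem d x).mp hx.1
    have hz1 := (hPmem d z).mp hz.1
    have key2 : ∀ w : ℝ, r ^ d * Real.cos (w + d * θ) - Real.cos w =
        (r ^ d * Real.cos (d * θ) - 1) * Real.cos w +
          (-(r ^ d * Real.sin (d * θ))) * Real.sin w := by
      intro w; rw [Real.cos_add]; ring
    have key3 : ∀ w : ℝ, δ' ℓ * Real.cos w - r ^ d * Real.cos (w + d * θ) =
        (δ' ℓ - r ^ d * Real.cos (d * θ)) * Real.cos w +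
          (r ^ d * Real.sin (d * θ)) * Real.sin w := by
      intro w; rw [Real.cos_add]; ring
    refine ⟨(hPmem d y).mpr ⟨hycos, ?_, ?_⟩, hyW⟩
    · have h2 := oc_lemma (r ^ d * Real.cos (d * θ) - 1) (-(r ^ d * Real.sin (d * θ))) k
        hx.2 hz.2 hxy hyz (by rw [← key2]; linarith [hx1.2.1]) (by rw [← key2]; linarith [hz1.2.1])
      rw [← key2] at h2
      linarith
    · have h3 := oc_lemma (δ' ℓ - r ^ d * Real.cos (d * θ)) (r ^ d * Real.sin (d * θ)) k
        hx.2 hz.2 hxy hyz (by rw [← key3]; linarith [hx1.2.2]) (by rw [← key3]; linarith [hz1.2.2])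
      rw [← key3] at h3
      linarith
  -- circle volume of Jset d equals Lebesgue measure of P d in a 2π-window at a
  have hJvol : ∀ d : ℤ, volume (Jset lam θ d 1 (δ' ℓ)) = volume (P d ∩ Set.Ioc a (a + 2*π)) :=
    fun d => angle_proj_measure a (Jopen d).measurableSet
  set m : ℕ → ℝ := fun i => (volume (Jset lam θ ((D:ℤ)+(i:ℤ)) 1 (δ' ℓ))).toReal with hmdef
  have hm0 : ∀ i, 0 ≤ m i := fun i => ENNReal.toReal_nonneg
  have hmne : ∀ i, volume (Jset lam θ ((D:ℤ)+(i:ℤ)) 1 (δ' ℓ)) ≠ ⊤ :=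
    fun i => measure_ne_top _ _
  have hpartial : ∀ F : Finset ℕ, ∑ i ∈ F, m i ≤ S := by
    intro F
    simp only [hmdef, hSdef]
    calc ∑ i ∈ F, (volume (Jset lam θ ((D:ℤ)+(i:ℤ)) 1 (δ' ℓ))).toReal
        = (∑ i ∈ F, volume (Jset lam θ ((D:ℤ)+(i:ℤ)) 1 (δ' ℓ))).toReal :=
          (ENNReal.toReal_sum (s := F)
            (f := fun i : ℕ => volume (Jset lam θ ((D:ℤ)+(i:ℤ)) 1 (δ' ℓ)))
            (fun i _ => hmne i)).symm
    _ ≤ _ := ENNReal.toReal_mono htsum_ne (ENNReal.sum_le_tsum F)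
  -- tail bound
  set C₀ : ℝ := π * δ' ℓ * (1 - r⁻¹)⁻¹ with hC₀def
  have hrinv1 : r⁻¹ < 1 := by
    rw [inv_lt_one_iff₀]; right; exact habs
  have hrinv0 : 0 < r⁻¹ := by positivity
  have hC₀0 : 0 < C₀ := by
    rw [hC₀def]
    have : 0 < 1 - r⁻¹ := by linarith
    positivity
  have htail : ∀ N : ℕ, 1 ≤ N →
      (∑' k : ℕ, volume (Jset lam θ ((N:ℤ)+(k:ℤ)) 1 (δ' ℓ)))
        ≤ ENNReal.ofReal (C₀ * (r⁻¹)^N) := by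
    intro N hN
    have hterm : ∀ k : ℕ, volume (Jset lam θ ((N:ℤ)+(k:ℤ)) 1 (δ' ℓ))
        ≤ ENNReal.ofReal ((π * δ' ℓ * (r⁻¹)^N) * (r⁻¹)^k) := by
      intro k
      have hd1 : (1:ℤ) ≤ (N:ℤ)+(k:ℤ) := by
        have : (1:ℤ) ≤ (N:ℤ) := by exact_mod_cast hN
        omega
      refine le_trans (volume_Jset_le lam θ habs hd1 hδℓ0 hδtop.le) ?_
      apply ENNReal.ofReal_le_ofReal
      have : (r ^ ((N:ℤ)+(k:ℤ)))⁻¹ = (r⁻¹)^N * (r⁻¹)^k := by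
        rw [show ((N:ℤ)+(k:ℤ)) = ((N+k : ℕ) : ℤ) by push_cast; ring, zpow_natCast,
          ← inv_pow, pow_add]
      rw [this]
      ring_nf
      rfl
    calc (∑' k : ℕ, volume (Jset lam θ ((N:ℤ)+(k:ℤ)) 1 (δ' ℓ)))
        ≤ ∑' k : ℕ, ENNReal.ofReal ((π * δ' ℓ * (r⁻¹)^N) * (r⁻¹)^k) :=
          ENNReal.tsum_le_tsum hterm
    _ = ENNReal.ofReal (∑' k : ℕ, (π * δ' ℓ * (r⁻¹)^N) * (r⁻¹)^k) := by
          rw [ENNReal.ofReal_tsum_of_nonneg]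
          · intro k; positivity
          · exact (summable_geometric_of_lt_one hrinv0.le hrinv1).mul_left _
    _ = ENNReal.ofReal (C₀ * (r⁻¹)^N) := by
          rw [tsum_mul_left, tsum_geometric_of_lt_one hrinv0.le hrinv1]
          congr 1
          rw [hC₀def]; ring
  -- choose N₀ by the growth of r^n against n^3
  have htend := tendsto_pow_const_div_const_pow_of_one_lt 3 habs
  set C₁ : ℝ := max C₀ 1 with hC₁def
  have hC₁0 : 0 < C₁ := lt_of_lt_of_le one_pos (le_max_right _ _)
  have hC₀C₁ : C₀ ≤ C₁ := le_max_left _ _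
  obtain ⟨N₀, hN₀⟩ := Filter.eventually_atTop.mp
    (htend.eventually_lt_const (show (0:ℝ) < 1/C₁ by positivity))
  -- the threshold
  refine ⟨min (min 1 ((gap/(4*D+9))^2)) (1/((N₀:ℝ)+1)^2), by positivity, ?_⟩
  intro ε hε0 hεlt
  have hε1 : ε < 1 := lt_of_lt_of_le hεlt (le_trans (min_le_left _ _) (min_le_left _ _))
  have hεgap2 : ε < (gap/(4*D+9))^2 :=
    lt_of_lt_of_le hεlt (le_trans (min_le_left _ _) (min_le_right _ _))
  have hεN₀ : ε < 1/((N₀:ℝ)+1)^2 := lt_of_lt_of_le hεlt (min_le_right _ _)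
  have hD9 : (0:ℝ) < 4*D+9 := by positivity
  have hεgap : Real.sqrt ε < gap/(4*D+9) := by
    have h1 : Real.sqrt ε < Real.sqrt ((gap/(4*D+9))^2) :=
      Real.sqrt_lt_sqrt hε0.le hεgap2
    rwa [Real.sqrt_sq (by positivity)] at h1
  have hsqε0 : 0 < Real.sqrt ε := Real.sqrt_pos.mpr hε0
  have hεsq : ε ≤ Real.sqrt ε := (aux_sqrt_facts hε0 hε1.le).1
  have hsqε1 : Real.sqrt ε ≤ 1 := (aux_sqrt_facts hε0 hε1.le).2
  -- w = ε^{-1/2}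
  set w : ℝ := ε ^ (-(1:ℝ)/2) with hwdef
  have hw0 : 0 < w := Real.rpow_pos_of_pos hε0 _
  have hw2 : w^2 = ε⁻¹ := by
    rw [hwdef, ← Real.rpow_natCast (ε ^ (-(1:ℝ)/2)) 2, ← Real.rpow_mul hε0.le]
    norm_num
    exact Real.rpow_neg_one ε
  have hεw : ε * w = Real.sqrt ε := by
    have hsq : (ε*w)^2 = ε := by
      rw [mul_pow, hw2, sq, mul_assoc, mul_inv_cancel₀ hε0.ne', mul_one]
    have := Real.sqrt_sq (by positivity : (0:ℝ) ≤ ε*w)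
    rw [hsq] at this
    exact this.symm
  -- D'
  set D' : ℕ := max D (Nat.floor w + 1) with hD'def
  have hD'D : D ≤ D' := le_max_left _ _
  have hD'1 : 1 ≤ D' := le_trans hD hD'D
  have hD'w : w < (D' : ℝ) := by
    have h1 : w < (Nat.floor w : ℝ) + 1 := Nat.lt_floor_add_one w
    have h2 : ((Nat.floor w + 1 : ℕ) : ℝ) ≤ (D' : ℝ) := by
      exact_mod_cast le_max_right D (Nat.floor w + 1)
    push_cast at h2
    linarith
  have hD'up : (D' : ℝ) ≤ (D:ℝ) + w + 1 := by
    rw [hD'def]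
    rw [Nat.cast_max]
    apply max_le
    · linarith [hw0]
    · have := Nat.floor_le hw0.le
      push_cast
      linarith
  have hN₀D' : N₀ ≤ D' := by
    have h1 : ((N₀:ℝ)+1)^2 < ε⁻¹ := by
      have hpos : (0:ℝ) < ((N₀:ℝ)+1)^2 := by positivity
      rw [lt_inv_comm₀ hpos hε0]
      calc ε < 1/((N₀:ℝ)+1)^2 := hεN₀
      _ = (((N₀:ℝ)+1)^2)⁻¹ := one_div _
    have h2 : (N₀:ℝ)+1 < w := by
      apply aux_sq_lt (by positivity) hw0.le
      rw [hw2]; exact h1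
    have : (N₀:ℝ) < (D':ℝ) := by linarith
    exact_mod_cast this.le
  -- tail at D' is < ε
  have htailD' : (∑' k : ℕ, volume (Jset lam θ ((D':ℤ)+(k:ℤ)) 1 (δ' ℓ)))
      < ENNReal.ofReal ε := by
    refine lt_of_le_of_lt (htail D' hD'1) ?_
    rw [ENNReal.ofReal_lt_ofReal_iff hε0]
    exact aux_tail_small hC₀0 hC₀C₁ hC₁0 hr0 (hN₀ D' hN₀D')
      hD'1 hε0 hw0 hw2 hD'w
  -- grid parameters
  set M : ℕ := Nat.floor (L/ε) with hMdef
  have hgapL : gap ≤ L := by rw [hgapdef]; linarith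
  have hεL : ε ≤ L := by
    have h1 : gap/(4*(D:ℝ)+9) ≤ gap := by
      apply div_le_self hgap.le
      have : (0:ℝ) ≤ (D:ℝ) := Nat.cast_nonneg D
      linarith
    linarith
  have hM1 : 1 ≤ M := by
    rw [hMdef]
    apply Nat.le_floor
    rw [Nat.cast_one, le_div_iff₀ hε0, one_mul]
    exact hεL
  have hMεL : (M:ℝ)*ε ≤ L := by
    have h1 : (M:ℝ) ≤ L/ε := by rw [hMdef]; exact Nat.floor_le (by positivity)
    have h2 : (M:ℝ)*ε ≤ (L/ε)*ε := mul_le_mul_of_nonneg_right h1 hε0.le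
    calc (M:ℝ)*ε ≤ (L/ε)*ε := h2
    _ = L := by field_simp
  have hMεgt : L - ε < (M:ℝ)*ε := by
    have h1 : L/ε < (M:ℝ) + 1 := by rw [hMdef]; exact Nat.lt_floor_add_one (L/ε)
    have h2 : L < ((M:ℝ)+1)*ε := by
      rw [div_lt_iff₀ hε0] at h1
      linarith
    linarith
  -- windows covering the interval
  set k₀ : ℤ := Int.ceil ((a - π/2)/(2*π)) with hk₀def
  have hk₀1 : a - π/2 ≤ 2*π*k₀ := by
    have h1 := Int.le_ceil ((a - π/2)/(2*π))
    rw [div_le_iff₀ (by positivity : (0:ℝ) < 2*π)] at h1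
    rw [hk₀def]; linarith
  have hk₀2 : 2*π*k₀ < a - π/2 + 2*π := by
    have h2 : ((k₀:ℝ)) < (a - π/2)/(2*π) + 1 := Int.ceil_lt_add_one _
    have h3 : (k₀:ℝ) * (2*π) < ((a - π/2)/(2*π) + 1) * (2*π) :=
      mul_lt_mul_of_pos_right h2 (by positivity)
    have h4 : ((a - π/2)/(2*π) + 1) * (2*π) = a - π/2 + 2*π := by field_simp
    linarith
  have hWcover : ∀ y : ℝ, a < y → y ≤ a + 2*π → 0 < Real.cos y →
      y ∈ W k₀ ∨ y ∈ W (k₀+1) := by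
    intro y hya hy2π hycos
    set z := toIocMod Real.two_pi_pos (-π) y with hzdef
    have hzmem : z ∈ Set.Ioc (-π) (-π + 2*π) := toIocMod_mem_Ioc _ _ _
    have hzmem' : z ∈ Set.Ioc (-π) π := ⟨hzmem.1, by linarith [hzmem.2]⟩
    set k : ℤ := toIocDiv Real.two_pi_pos (-π) y with hkdef
    have hyzk : y - z = (k:ℝ) * (2*π) := by
      rw [hzdef, hkdef]
      have h5 := self_sub_toIocMod Real.two_pi_pos (-π) y
      rwa [zsmul_eq_mul] at h5
    have hcz : Real.cos z = Real.cos y := by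
      rw [show z = y - 2*π*(k:ℝ) by linarith, aux_cos_shift]
    have hzwin := cos_pos_Ioc hzmem' (by rw [hcz]; exact hycos)
    have hyWk : y ∈ W k := by
      constructor
      · show 2*π*(k:ℝ) - π/2 < y
        linarith [hzwin.1]
      · show y < 2*π*(k:ℝ) + π/2
        linarith [hzwin.2]
    have hk_low : k₀ ≤ k := by
      have h6 : 2*π*(k:ℝ) > a - π/2 := by
        have := hyWk.2
        linarith [hzwin.2]
      have h7 : (2*π)*((k₀:ℝ) - 1) < (2*π)*(k:ℝ) := by linarith
      have h7' : ((k₀:ℝ)) - 1 < (k:ℝ) := (mul_lt_mul_iff_right₀ (by positivity)).mp h7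
      have h8 : (k₀:ℤ) - 1 < k := by exact_mod_cast h7'
      omega
    have hk_high : k ≤ k₀ + 1 := by
      have h6 : 2*π*(k:ℝ) < a + 2*π + π/2 := by linarith [hzwin.1]
      have h7a : (2*π)*(k:ℝ) < (2*π)*((k₀:ℝ) + 3/2) := by linarith
      have h7 : (k:ℝ) < (k₀:ℝ) + 3/2 := (mul_lt_mul_iff_right₀ (by positivity)).mp h7a
      have h8 : (k:ℤ) < k₀ + 2 := by
        have : (k:ℝ) < ((k₀ + 2 : ℤ) : ℝ) := by push_cast; linarith
        exact_mod_cast this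
      omega
    rcases (by omega : k = k₀ ∨ k = k₀ + 1) with h | h
    · left; rwa [h] at hyWk
    · right; rwa [h] at hyWk
  -- the good subinterval exists
  have hgood : ∃ i, i ∈ Finset.range M ∧ ∀ i' : ℕ, i' < D' - D →
      Set.Ioo (a + i*ε) (a + i*ε + ε) ∩ P ((D:ℤ)+(i':ℤ)) = ∅ := by
    by_contra hcon
    push_neg at hcon
    set C : ℕ → Set ℝ := fun j =>
      P ((D:ℤ) + ((j/2 : ℕ) : ℤ)) ∩ W (if j % 2 = 0 then k₀ else k₀ + 1) with hCdef
    have hconv : ∀ j, ∀ x y z : ℝ, x ∈ C j → z ∈ C j → x ≤ y → y ≤ z → y ∈ C j := by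
      intro j x y z hx hz hxy hyz
      exact hPWconv _ _ x y z hx hz hxy hyz
    have hbad : ∀ i ∈ Finset.range M, ∃ j ∈ Finset.range (2*(D'-D)),
        (Set.Ioo (a + i*ε) (a + i*ε + ε) ∩ C j).Nonempty := by
      intro i hi
      obtain ⟨i', hi', hne⟩ := hcon i hi
      obtain ⟨y, hyI, hyP⟩ := hne
      have hiM : i < M := Finset.mem_range.mp hi
      have hya : a < y := by
        have h1 : (0:ℝ) ≤ (i:ℝ)*ε := by positivity
        have := hyI.1
        linarith
      have hy2π : y ≤ a + 2*π := by
        have h1 : ((i:ℝ)+1)*ε ≤ (M:ℝ)*ε := by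
          have : (i:ℝ)+1 ≤ (M:ℝ) := by exact_mod_cast hiM
          exact mul_le_mul_of_nonneg_right this hε0.le
        have h2 : (i:ℝ)*ε + ε = ((i:ℝ)+1)*ε := by ring
        have := hyI.2
        linarith
      have hycos : 0 < Real.cos y := ((hPmem _ y).mp hyP).1
      rcases hWcover y hya hy2π hycos with hW | hW
      · refine ⟨2*i', Finset.mem_range.mpr (by omega), y, hyI, ?_⟩
        simp only [hCdef]
        refine ⟨?_, ?_⟩
        · rw [show (2*i')/2 = i' from by omega]
          exact hyP
        · rw [if_pos (by omega : (2*i') % 2 = 0)]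
          exact hW
      · refine ⟨2*i'+1, Finset.mem_range.mpr (by omega), y, hyI, ?_⟩
        simp only [hCdef]
        refine ⟨?_, ?_⟩
        · rw [show (2*i'+1)/2 = i' from by omega]
          exact hyP
        · rw [if_neg (by omega : ¬((2*i'+1) % 2 = 0))]
          exact hW
    have hPH := pigeonhole a ε hε0 M (2*(D'-D)) C hconv hbad
    -- bound the sum
    set X : Set ℝ := Set.Ioo a (a + (M:ℝ)*ε) with hXdef
    have hXsub : X ⊆ Set.Ioc a (a + 2*π) := by
      intro u hu
      exact ⟨hu.1, by have := hu.2; linarith⟩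
    have hpair : ∀ i' : ℕ, i' < D' - D →
        (volume (C (2*i') ∩ X)).toReal + (volume (C (2*i'+1) ∩ X)).toReal ≤ m i' := by
      intro i' _
      have e1 : C (2*i') = P ((D:ℤ)+(i':ℤ)) ∩ W k₀ := by
        simp only [hCdef]
        rw [show (2*i')/2 = i' from by omega, if_pos (by omega : (2*i') % 2 = 0)]
      have e2 : C (2*i'+1) = P ((D:ℤ)+(i':ℤ)) ∩ W (k₀+1) := by
        simp only [hCdef]
        rw [show (2*i'+1)/2 = i' from by omega, if_neg (by omega : ¬((2*i'+1) % 2 = 0))]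
      rw [e1, e2]
      set A := P ((D:ℤ)+(i':ℤ)) ∩ W k₀ ∩ X with hAdef
      set B := P ((D:ℤ)+(i':ℤ)) ∩ W (k₀+1) ∩ X with hBdef
      have hWdisj : Disjoint (W k₀) (W (k₀+1)) := by
        rw [Set.disjoint_left]
        intro u hu1 hu2
        have h1 := hu1.2
        have h2 := hu2.1
        push_cast at h1 h2
        linarith
      have hdisj : Disjoint A B := by
        apply Set.disjoint_of_subset ?_ ?_ hWdisj
        · rw [hAdef]; intro u hu; exact hu.1.2
        · rw [hBdef]; intro u hu; exact hu.1.2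
      have hBmeas : MeasurableSet B := by
        apply MeasurableSet.inter
        · exact ((hPopen _).inter isOpen_Ioo).measurableSet
        · exact measurableSet_Ioo
      have hsum : volume A + volume B = volume (A ∪ B) := (measure_union hdisj hBmeas).symm
      have hsub : A ∪ B ⊆ P ((D:ℤ)+(i':ℤ)) ∩ Set.Ioc a (a + 2*π) := by
        rintro u (hu | hu)
        · exact ⟨hu.1.1, hXsub hu.2⟩
        · exact ⟨hu.1.1, hXsub hu.2⟩
      have hle : volume A + volume B ≤ volume (Jset lam θ ((D:ℤ)+(i':ℤ)) 1 (δ' ℓ)) := by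
        rw [hsum, hJvol]
        exact measure_mono hsub
      have hAfin : volume A ≠ ⊤ := by
        refine ne_top_of_le_ne_top ?_ (measure_mono (Set.inter_subset_right))
        rw [hXdef, Real.volume_Ioo]
        exact ENNReal.ofReal_ne_top
      have hBfin : volume B ≠ ⊤ := by
        refine ne_top_of_le_ne_top ?_ (measure_mono (Set.inter_subset_right))
        rw [hXdef, Real.volume_Ioo]
        exact ENNReal.ofReal_ne_top
      calc (volume A).toReal + (volume B).toReal
          = (volume A + volume B).toReal := (ENNReal.toReal_add hAfin hBfin).symm
      _ ≤ m i' := ENNReal.toReal_mono (hmne (i':ℤ)) hle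
    have hsumle : ∑ j ∈ Finset.range (2*(D'-D)),
        ((volume (C j ∩ X)).toReal + 2*ε) ≤ S + 4*(((D'-D:ℕ)):ℝ)*ε := by
      rw [sum_range_two_mul (D'-D) (fun j => (volume (C j ∩ X)).toReal + 2*ε)]
      have hterm : ∀ i' ∈ Finset.range (D'-D),
          (((volume (C (2*i') ∩ X)).toReal + 2*ε) +
            ((volume (C (2*i'+1) ∩ X)).toReal + 2*ε)) ≤ m i' + 4*ε := by
        intro i' hi'
        have := hpair i' (Finset.mem_range.mp hi')
        linarith
      calc ∑ i' ∈ Finset.range (D'-D),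
            (((volume (C (2*i') ∩ X)).toReal + 2*ε) +
              ((volume (C (2*i'+1) ∩ X)).toReal + 2*ε))
          ≤ ∑ i' ∈ Finset.range (D'-D), (m i' + 4*ε) := Finset.sum_le_sum hterm
      _ = (∑ i' ∈ Finset.range (D'-D), m i') + ((D'-D:ℕ):ℝ)*(4*ε) := by
            rw [Finset.sum_add_distrib, Finset.sum_const, Finset.card_range, nsmul_eq_mul]
      _ ≤ S + 4*(((D'-D:ℕ)):ℝ)*ε := by
            have := hpartial (Finset.range (D'-D))
            linarith
    have hMle : (M:ℝ)*ε ≤ S + 4*(((D'-D:ℕ)):ℝ)*ε := le_trans hPH hsumle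
    have hcast : (((D'-D:ℕ)):ℝ) = (D':ℝ) - (D:ℝ) := by
      rw [Nat.cast_sub hD'D]
    have hwεs : (D':ℝ) ≤ (D:ℝ) + Real.sqrt ε / ε + 1 := by
      have hww : w = Real.sqrt ε / ε := by
        rw [eq_div_iff hε0.ne', mul_comm]
        exact hεw
      rw [← hww]
      exact hD'up
    have h9 : (M:ℝ)*ε ≤ S + 4*((D':ℝ)-(D:ℝ))*ε + 4*(D:ℝ)*ε := by
      rw [hcast] at hMle
      have h10 : (0:ℝ) ≤ 4*(D:ℝ)*ε := by positivity
      linarith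
    exact aux_final_contra hgapdef hgap hε0 (Nat.cast_nonneg D) hεsq hεgap hwεs hMεgt h9
  -- conclusion
  obtain ⟨i, hiM, hgoodi⟩ := hgood
  have hiM' : i < M := Finset.mem_range.mp hiM
  have hi0 : (0:ℝ) ≤ (i:ℝ)*ε := by positivity
  have hi1M : ((i:ℝ)+1)*ε ≤ (M:ℝ)*ε := by
    have : (i:ℝ)+1 ≤ (M:ℝ) := by exact_mod_cast hiM'
    exact mul_le_mul_of_nonneg_right this hε0.le
  have hieq : (i:ℝ)*ε + ε = ((i:ℝ)+1)*ε := by ring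
  have hIoosub : Set.Ioo (a + i*ε) (a + i*ε + ε) ⊆ Set.Ioo a b := by
    intro u hu
    constructor
    · linarith [hu.1]
    · have := hu.2
      linarith
  refine ⟨a + i*ε, a + i*ε + ε, by linarith, by linarith, by linarith, by ring,
    D', hD'w, ?_, ?_, ?_⟩
  · intro x hx
    apply hcondB
    obtain ⟨y, hy, rfl⟩ := hx
    exact ⟨y, hIoosub hy, rfl⟩
  · intro d hd0 hdlt hdbf
    rcases lt_or_ge d (D:ℤ) with hcase | hcase
    · have h0 := hcondC d hd0 hcase hdbf
      have hsub2 : (fun y : ℝ => (y : Real.Angle)) '' Set.Ioo (a + i*ε) (a + i*ε + ε)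
            ∩ Jset lam θ d 1 (δ' ℓ)
          ⊆ (fun y : ℝ => (y : Real.Angle)) '' Set.Ioo a b ∩ Jset lam θ d 1 (δ' ℓ) :=
        Set.inter_subset_inter_left _ (Set.image_mono hIoosub)
      exact Set.subset_eq_empty hsub2 h0
    · set i' : ℕ := (d - (D:ℤ)).toNat with hi'def
      have hdi' : (D:ℤ) + (i':ℤ) = d := by
        have := Int.toNat_of_nonneg (by omega : (0:ℤ) ≤ d - (D:ℤ))
        omega
      have hi'lt : i' < D' - D := by
        have hDD' : ((D':ℕ):ℤ) = (D':ℤ) := rfl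
        omega
      have hempty := hgoodi i' hi'lt
      rw [hdi'] at hempty
      rw [Set.eq_empty_iff_forall_notMem]
      rintro x ⟨⟨y, hy, rfl⟩, hxJ⟩
      have hyP : y ∈ P d := hxJ
      rw [Set.eq_empty_iff_forall_notMem] at hempty
      exact hempty y ⟨hy, hyP⟩
  · calc ∑' k : ℕ, volume (Jset lam θ ((D':ℤ)+(k:ℤ)) 1 (δ' ℓ))
        < ENNReal.ofReal ε := htailD'
    _ = volume ((fun y : ℝ => (y : Real.Angle)) '' Set.Ioo (a + i*ε) (a + i*ε + ε)) := by
        have hπ3 := Real.pi_gt_three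
        rw [volume_image_Ioo _ _ (by linarith)
          (by linarith : (a + i*ε + ε) - (a + i*ε) ≤ 2*π)]
        congr 1
        ring
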